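/- arXiv:1107.5542 — 3 statements merged into one kernel-verified Lean document; each statement's English description precedes it below -/
import Mathlib

section
/- Let E be an n×n matrix of nonnegative integers with det E ≠ 0, and let E^T denote its transpose. Then the symmetry group G_{E^T} = {μ ∈ (ℂ*)^n : ∏_j μ_j^{E_{ji}} = 1 for all i} is isomorphic as a group to the character group Hom(G_E, ℂ*) of G_E = {λ ∈ (ℂ*)^n : ∏_j λ_j^{E_{ij}} = 1 for all i}. -/
open Finset

variable {n : ℕ}

/-- The diagonal symmetry group `G_E` of the invertible polynomial
`f(x) = ∑ i, ∏ j, x_j ^ E i j`, realized as the subgroup of `(ℂ*)^n` of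
diagonal transformations `λ` with `∏ j, λ_j ^ E i j = 1` for all `i`. -/
def symGroup (E : Matrix (Fin n) (Fin n) ℕ) : Subgroup (Fin n → ℂˣ) where
  carrier := {l | ∀ i, ∏ j, l j ^ E i j = 1}
  one_mem' := by intro i; simp
  mul_mem' := by
    intro a b ha hb i
    simp only [Pi.mul_apply, mul_pow, Finset.prod_mul_distrib, ha i, hb i, mul_one]
  inv_mem' := by
    intro a ha i
    simp only [Pi.inv_apply, inv_pow, Finset.prod_inv_distrib, ha i, inv_one]

namespace BHaux

open Matrix Complex

noncomputable def Ec (E : Matrix (Fin n) (Fin n) ℕ) : Matrix (Fin n) (Fin n) ℂ :=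
  E.map (Nat.cast : ℕ → ℂ)

def zc (a : Fin n → ℤ) : Fin n → ℂ := fun j => (a j : ℂ)

/-- The exponential map `a ↦ exp (2πi · E⁻¹ a)`. -/
noncomputable def u (E : Matrix (Fin n) (Fin n) ℕ) (a : Fin n → ℤ) : Fin n → ℂˣ :=
  fun j => Units.mk0 (Complex.exp (2 * Real.pi * Complex.I * ((Ec E)⁻¹.mulVec (zc a)) j))
    (Complex.exp_ne_zero _)

variable {E : Matrix (Fin n) (Fin n) ℕ}

lemma hEc (hdet : (E.map (Nat.cast : ℕ → ℤ)).det ≠ 0) : IsUnit (Ec E).det := by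
  have h1 : Ec E = (E.map (Nat.cast : ℕ → ℤ)).map (Int.cast : ℤ → ℂ) := by
    simp [Ec, Matrix.map_map]
    rfl
  have h2 := (Int.castRingHom ℂ).map_det (E.map (Nat.cast : ℕ → ℤ))
  rw [h1]
  have h3 : (E.map (Nat.cast : ℕ → ℤ)).map (Int.cast : ℤ → ℂ) =
      (Int.castRingHom ℂ).mapMatrix (E.map (Nat.cast : ℕ → ℤ)) := rfl
  rw [h3, ← h2]
  simp [isUnit_iff_ne_zero, hdet]

lemma zc_add (a b : Fin n → ℤ) : zc (a + b) = zc a + zc b := by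
  funext j; simp [zc]

lemma u_val (a : Fin n → ℤ) (j : Fin n) :
    (u E a j : ℂ) = Complex.exp (2 * Real.pi * Complex.I * ((Ec E)⁻¹.mulVec (zc a)) j) := rfl

lemma u_add (a b : Fin n → ℤ) : u E (a + b) = u E a * u E b := by
  funext j
  ext
  rw [Pi.mul_apply, Units.val_mul, u_val, u_val, u_val, zc_add, Matrix.mulVec_add, Pi.add_apply,
    mul_add, Complex.exp_add]

lemma u_zero : u E 0 = 1 := by
  funext j
  ext
  have : zc (0 : Fin n → ℤ) = 0 := by funext j; simp [zc]
  rw [u_val, this]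
  simp

lemma u_neg (a : Fin n → ℤ) : u E (-a) = (u E a)⁻¹ := by
  exact eq_inv_of_mul_eq_one_left (by rw [← u_add, neg_add_cancel, u_zero])

lemma u_sum {ι : Type*} (s : Finset ι) (f : ι → (Fin n → ℤ)) :
    u E (∑ i ∈ s, f i) = ∏ i ∈ s, u E (f i) := by
  classical
  induction s using Finset.induction with
  | empty => simpa using u_zero
  | insert _ _ h ih =>
    rw [Finset.sum_insert h, Finset.prod_insert h, u_add, ih]

lemma u_zsmul (k : ℤ) (a : Fin n → ℤ) : u E (k • a) = u E a ^ k := by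
  induction k using Int.induction_on with
  | zero => simpa using u_zero
  | succ m ih =>
    have : ((m : ℤ) + 1) • a = (m : ℤ) • a + a := by rw [add_smul, one_smul]
    rw [this, u_add, ih, _root_.zpow_add_one]
  | pred m ih =>
    have : (-(m : ℤ) - 1) • a = (-(m : ℤ)) • a + (-a) := by rw [sub_smul, one_smul, neg_smul]; abel
    rw [this, u_add, ih, u_neg, _root_.zpow_sub_one]

lemma val_prod_pow (l : Fin n → ℂˣ) (θ : Fin n → ℂ)
    (h : ∀ j, (l j : ℂ) = Complex.exp (2 * Real.pi * Complex.I * θ j)) (i : Fin n) :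
    ((∏ j, l j ^ E i j : ℂˣ) : ℂ) =
      Complex.exp (2 * Real.pi * Complex.I * ((Ec E).mulVec θ) i) := by
  push_cast
  have : ∀ j, ((l j : ℂ)) ^ E i j = Complex.exp ((E i j : ℂ) * (2 * Real.pi * Complex.I * θ j)) := by
    intro j
    rw [h j, Complex.exp_nat_mul]
  simp_rw [this, ← Complex.exp_sum]
  congr 1
  simp [Matrix.mulVec, dotProduct, Ec, Finset.mul_sum]
  congr 1
  ext j
  ring

lemma mulVec_inv_mulVec (hE : IsUnit (Ec E).det) (v : Fin n → ℂ) :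
    (Ec E).mulVec ((Ec E)⁻¹.mulVec v) = v := by
  rw [Matrix.mulVec_mulVec, Matrix.mul_nonsing_inv _ hE, Matrix.one_mulVec]

lemma inv_mulVec_mulVec (hE : IsUnit (Ec E).det) (v : Fin n → ℂ) :
    (Ec E)⁻¹.mulVec ((Ec E).mulVec v) = v := by
  rw [Matrix.mulVec_mulVec, Matrix.nonsing_inv_mul _ hE, Matrix.one_mulVec]

/-- `u a` always lands in the symmetry group. -/
lemma u_mem (hE : IsUnit (Ec E).det) (a : Fin n → ℤ) : u E a ∈ symGroup E := by
  intro i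
  ext
  rw [val_prod_pow (u E a) _ (fun j => rfl) i, mulVec_inv_mulVec hE]
  have : 2 * (Real.pi : ℂ) * Complex.I * zc a i = (a i : ℂ) * (2 * Real.pi * Complex.I) := by
    simp [zc]; ring
  rw [this, Complex.exp_int_mul_two_pi_mul_I]
  simp

lemma zc_mulVec (k : Fin n → ℤ) :
    zc ((E.map (Nat.cast : ℕ → ℤ)).mulVec k) = (Ec E).mulVec (zc k) := by
  funext j
  simp [zc, Matrix.mulVec, dotProduct, Ec]

/-- The image of the lattice `E ℤ^n` is trivial. -/
lemma u_mulVec (hE : IsUnit (Ec E).det) (k : Fin n → ℤ) :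
    u E ((E.map (Nat.cast : ℕ → ℤ)).mulVec k) = 1 := by
  funext j
  ext
  rw [u_val, zc_mulVec, inv_mulVec_mulVec hE]
  have : 2 * (Real.pi : ℂ) * Complex.I * zc k j = (k j : ℂ) * (2 * Real.pi * Complex.I) := by
    simp [zc]; ring
  rw [this, Complex.exp_int_mul_two_pi_mul_I]
  simp

/-- The kernel of `u` is contained in the lattice `E ℤ^n`. -/
lemma u_ker (hE : IsUnit (Ec E).det) {a : Fin n → ℤ} (h : u E a = 1) :
    ∃ k : Fin n → ℤ, a = (E.map (Nat.cast : ℕ → ℤ)).mulVec k := by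
  have h2 : ∀ j, ∃ m : ℤ, ((Ec E)⁻¹.mulVec (zc a)) j = m := by
    intro j
    have := congrFun h j
    have hv : Complex.exp (2 * Real.pi * Complex.I * ((Ec E)⁻¹.mulVec (zc a)) j) = 1 := by
      have := congrArg Units.val this
      rwa [u_val] at this
    rw [Complex.exp_eq_one_iff] at hv
    obtain ⟨m, hm⟩ := hv
    refine ⟨m, ?_⟩
    have h2pi : (2 * Real.pi * Complex.I : ℂ) ≠ 0 :=
      mul_ne_zero (mul_ne_zero two_ne_zero (by exact_mod_cast Real.pi_ne_zero)) Complex.I_ne_zero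
    rw [mul_comm (m : ℂ)] at hm
    exact mul_left_cancel₀ h2pi hm
  choose k hk using h2
  refine ⟨k, ?_⟩
  have hzc : zc a = (Ec E).mulVec (zc k) := by
    have : (Ec E)⁻¹.mulVec (zc a) = zc k := funext hk
    rw [← this, mulVec_inv_mulVec hE]
  have : zc a = zc ((E.map (Nat.cast : ℕ → ℤ)).mulVec k) := by rw [hzc, zc_mulVec]
  funext j
  have := congrFun this j
  simp only [zc] at this
  exact_mod_cast this

/-- `u` surjects onto the symmetry group. -/
lemma u_surj (hE : IsUnit (Ec E).det) {l : Fin n → ℂˣ}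
    (hl : l ∈ symGroup E) : ∃ a : Fin n → ℤ, u E a = l := by
  set θ : Fin n → ℂ := fun j => Complex.log (l j) with hθ
  have hexp : ∀ j, (l j : ℂ) =
      Complex.exp (2 * Real.pi * Complex.I * (θ j / (2 * Real.pi * Complex.I))) := by
    intro j
    have h2pi : (2 * Real.pi * Complex.I : ℂ) ≠ 0 :=
      mul_ne_zero (mul_ne_zero two_ne_zero (by exact_mod_cast Real.pi_ne_zero)) Complex.I_ne_zero
    rw [mul_div_cancel₀ _ h2pi, hθ, Complex.exp_log (Units.ne_zero (l j))]
  set θ' : Fin n → ℂ := fun j => θ j / (2 * Real.pi * Complex.I) with hθ'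
  have h3 : ∀ i, ∃ m : ℤ, ((Ec E).mulVec θ') i = m := by
    intro i
    have h1 : ((∏ j, l j ^ E i j : ℂˣ) : ℂ) = 1 := by rw [hl i]; simp
    rw [val_prod_pow l θ' hexp i, Complex.exp_eq_one_iff] at h1
    obtain ⟨m, hm⟩ := h1
    refine ⟨m, ?_⟩
    have h2pi : (2 * Real.pi * Complex.I : ℂ) ≠ 0 :=
      mul_ne_zero (mul_ne_zero two_ne_zero (by exact_mod_cast Real.pi_ne_zero)) Complex.I_ne_zero
    rw [mul_comm (m : ℂ)] at hm
    exact mul_left_cancel₀ h2pi hm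
  choose a ha using h3
  refine ⟨a, ?_⟩
  have hza : zc a = (Ec E).mulVec θ' := by
    funext i; rw [ha i]; rfl
  funext j
  ext
  rw [u_val, hza, inv_mulVec_mulVec hE, ← hexp j]

/-- `u a = u b` implies `a - b` is in the lattice. -/
lemma u_eq_iff (hE : IsUnit (Ec E).det) {a b : Fin n → ℤ} (h : u E a = u E b) :
    ∃ k : Fin n → ℤ, a = b + (E.map (Nat.cast : ℕ → ℤ)).mulVec k := by
  have h1 : u E (a - b) = 1 := by
    have : a - b = a + (-b) := by abel
    rw [this, u_add, u_neg, h, mul_inv_cancel]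
  obtain ⟨k, hk⟩ := u_ker hE h1
  exact ⟨k, by rw [← hk]; abel⟩

/-! ### The character-valued pairing -/

/-- The "evaluation" homomorphism `a ↦ ∏ j, μ j ^ a j`. -/
noncomputable def gmu (μ : Fin n → ℂˣ) (a : Fin n → ℤ) : ℂˣ := ∏ j, μ j ^ (a j)

lemma gmu_add (μ : Fin n → ℂˣ) (a b : Fin n → ℤ) :
    gmu μ (a + b) = gmu μ a * gmu μ b := by
  simp [gmu, _root_.zpow_add, Finset.prod_mul_distrib]

lemma gmu_zero (μ : Fin n → ℂˣ) : gmu μ 0 = 1 := by simp [gmu]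

lemma gmu_sum (μ : Fin n → ℂˣ) {ι : Type*} (s : Finset ι) (f : ι → (Fin n → ℤ)) :
    gmu μ (∑ i ∈ s, f i) = ∏ i ∈ s, gmu μ (f i) := by
  classical
  induction s using Finset.induction with
  | empty => simpa using gmu_zero μ
  | insert _ _ h ih => rw [Finset.sum_insert h, Finset.prod_insert h, gmu_add, ih]

lemma gmu_zsmul (μ : Fin n → ℂˣ) (k : ℤ) (a : Fin n → ℤ) :
    gmu μ (k • a) = gmu μ a ^ k := by
  rw [gmu, gmu, ← Finset.prod_zpow]
  refine Finset.prod_congr rfl fun j _ => ?_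
  rw [Pi.smul_apply, smul_eq_mul, mul_comm, _root_.zpow_mul]

lemma gmu_mul_left (μ ν : Fin n → ℂˣ) (a : Fin n → ℤ) :
    gmu (μ * ν) a = gmu μ a * gmu ν a := by
  simp [gmu, mul_zpow, Finset.prod_mul_distrib]

lemma gmu_single (μ : Fin n → ℂˣ) (j : Fin n) : gmu μ (Pi.single j 1) = μ j := by
  rw [gmu, Finset.prod_eq_single j]
  · simp
  · intro m _ hm
    simp [Pi.single_apply, hm]
  · simp

/-- Columns of `E` decompose as sums of scaled basis vectors. -/
lemma col_decomp (k : Fin n → ℤ) : (k : Fin n → ℤ) = ∑ m, k m • Pi.single m (1 : ℤ) := by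
  have := Finset.univ_sum_single k
  rw [← this]
  congr 1
  funext m
  funext j
  simp [Pi.single_apply, mul_comm]

/-- If `μ ∈ symGroup Eᵀ` then `gmu μ` kills the lattice `E ℤ^n`. -/
lemma gmu_mulVec {μ : Fin n → ℂˣ} (hμ : μ ∈ symGroup Eᵀ) (k : Fin n → ℤ) :
    gmu μ ((E.map (Nat.cast : ℕ → ℤ)).mulVec k) = 1 := by
  have hdecomp : (E.map (Nat.cast : ℕ → ℤ)).mulVec k
      = ∑ m, k m • (fun j => ((E j m : ℤ))) := by
    funext j
    simp [Matrix.mulVec, dotProduct, mul_comm]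
  rw [hdecomp, gmu_sum]
  have hcol : ∀ m, gmu μ (fun j => ((E j m : ℤ))) = 1 := by
    intro m
    have h1 : gmu μ (fun j => ((E j m : ℤ))) = ∏ j, μ j ^ (E j m) := by
      rw [gmu]
      exact Finset.prod_congr rfl fun j _ => zpow_natCast _ _
    rw [h1]
    have := hμ m
    simpa [Matrix.transpose_apply] using this
  calc ∏ m, gmu μ (k m • fun j => ((E j m : ℤ)))
      = ∏ m, (gmu μ (fun j => ((E j m : ℤ)))) ^ (k m) := by
        exact Finset.prod_congr rfl fun m _ => gmu_zsmul μ (k m) _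
    _ = 1 := by
        refine Finset.prod_eq_one fun m _ => ?_
        rw [hcol m, _root_.one_zpow]

/-- `gmu` is constant on fibers of `u`. -/
lemma gmu_fiber (hE : IsUnit (Ec E).det) {μ : Fin n → ℂˣ} (hμ : μ ∈ symGroup Eᵀ)
    {a b : Fin n → ℤ} (h : u E a = u E b) : gmu μ a = gmu μ b := by
  obtain ⟨k, hk⟩ := u_eq_iff hE h
  rw [hk, gmu_add, gmu_mulVec hμ, mul_one]

end BHaux
namespace BHaux

open Matrix

variable {E : Matrix (Fin n) (Fin n) ℕ}

/-- A section of `u`. -/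
noncomputable def sec (hE : IsUnit (Ec E).det) (l : symGroup E) : Fin n → ℤ :=
  Classical.choose (u_surj hE l.2)

lemma u_sec (hE : IsUnit (Ec E).det) (l : symGroup E) :
    u E (sec hE l) = (l : Fin n → ℂˣ) :=
  Classical.choose_spec (u_surj hE l.2)

/-- The character of `symGroup E` attached to `μ ∈ symGroup Eᵀ`. -/
noncomputable def chi (hE : IsUnit (Ec E).det) {μ : Fin n → ℂˣ} (hμ : μ ∈ symGroup Eᵀ) :
    symGroup E →* ℂˣ :=
  MonoidHom.mk' (fun l => gmu μ (sec hE l)) (by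
    intro l l'
    have h1 : u E (sec hE (l * l')) = u E (sec hE l + sec hE l') := by
      rw [u_sec, u_add, u_sec, u_sec]
      rfl
    show gmu μ (sec hE (l * l')) = gmu μ (sec hE l) * gmu μ (sec hE l')
    rw [gmu_fiber hE hμ h1, gmu_add])

lemma chi_apply (hE : IsUnit (Ec E).det) {μ : Fin n → ℂˣ} (hμ : μ ∈ symGroup Eᵀ)
    (l : symGroup E) : chi hE hμ l = gmu μ (sec hE l) := rfl

/-- Generators of `symGroup E`. -/
noncomputable def bas (hE : IsUnit (Ec E).det) (j : Fin n) : symGroup E :=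
  ⟨u E (Pi.single j 1), u_mem hE _⟩

lemma prod_bas_zpow (hE : IsUnit (Ec E).det) (k : Fin n → ℤ) :
    ((∏ m, bas hE m ^ (k m) : symGroup E) : Fin n → ℂˣ) = u E k := by
  have hcoe : ((∏ m, bas hE m ^ (k m) : symGroup E) : Fin n → ℂˣ)
      = ∏ m, (u E (Pi.single m (1:ℤ))) ^ (k m) := by
    push_cast
    rfl
  rw [hcoe]
  have h1 : ∀ m, (u E (Pi.single m (1:ℤ))) ^ (k m) = u E (k m • Pi.single m 1) :=
    fun m => (u_zsmul _ _).symm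
  calc (∏ m, (u E (Pi.single m (1:ℤ))) ^ (k m))
      = ∏ m, u E (k m • Pi.single m 1) := Finset.prod_congr rfl fun m _ => h1 m
    _ = u E (∑ m, k m • Pi.single m 1) := (u_sum _ _).symm
    _ = u E k := by rw [← col_decomp]

/-- Every element of `symGroup E` is a product of the generators. -/
lemma eq_prod_bas (hE : IsUnit (Ec E).det) (l : symGroup E) :
    l = ∏ m, bas hE m ^ (sec hE l m) := by
  refine Subtype.ext ?_
  rw [prod_bas_zpow hE, u_sec]

/-- columns of `E` as lattice vectors -/
lemma col_eq_mulVec (i : Fin n) :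
    (fun j => ((E j i : ℤ))) = (E.map (Nat.cast : ℕ → ℤ)).mulVec (Pi.single i 1) := by
  funext j
  simp [Matrix.mulVec_single, Matrix.map_apply]

lemma prod_bas_col (hE : IsUnit (Ec E).det) (i : Fin n) :
    (∏ j, bas hE j ^ (E j i) : symGroup E) = 1 := by
  refine Subtype.ext ?_
  have h1 : ((∏ j, bas hE j ^ (E j i) : symGroup E) : Fin n → ℂˣ)
      = ((∏ j, bas hE j ^ ((E j i : ℤ)) : symGroup E) : Fin n → ℂˣ) := by
    norm_cast
  rw [h1, prod_bas_zpow hE, col_eq_mulVec, u_mulVec hE]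
  rfl

/-- The homomorphism `symGroup Eᵀ →* (symGroup E →* ℂˣ)`. -/
noncomputable def Psi (hE : IsUnit (Ec E).det) : symGroup Eᵀ →* (symGroup E →* ℂˣ) :=
  MonoidHom.mk' (fun μ => chi hE μ.2) (by
    intro μ ν
    refine MonoidHom.ext fun l => ?_
    show gmu ((μ * ν : symGroup Eᵀ) : Fin n → ℂˣ) (sec hE l)
      = gmu (μ : Fin n → ℂˣ) (sec hE l) * gmu (ν : Fin n → ℂˣ) (sec hE l)
    rw [show ((μ * ν : symGroup Eᵀ) : Fin n → ℂˣ) = (μ : Fin n → ℂˣ) * ν from rfl,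
      gmu_mul_left])

lemma Psi_injective (hE : IsUnit (Ec E).det) : Function.Injective (Psi hE) := by
  rw [injective_iff_map_eq_one]
  intro μ hμ
  refine Subtype.ext (funext fun j => ?_)
  have h1 : chi hE μ.2 (bas hE j) = 1 := by rw [show chi hE μ.2 = Psi hE μ from rfl, hμ]; rfl
  rw [chi_apply] at h1
  have h2 : u E (sec hE (bas hE j)) = u E (Pi.single j 1) := by
    rw [u_sec]
    rfl
  rw [gmu_fiber hE μ.2 h2, gmu_single] at h1
  exact h1

lemma Psi_surjective (hE : IsUnit (Ec E).det) : Function.Surjective (Psi hE) := by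
  intro χ
  set μ : Fin n → ℂˣ := fun j => χ (bas hE j) with hμdef
  have hμmem : μ ∈ symGroup Eᵀ := by
    intro i
    have h1 : ∏ j, μ j ^ (Eᵀ i j) = ∏ j, χ (bas hE j) ^ (E j i) := by
      refine Finset.prod_congr rfl fun j _ => ?_
      rw [Matrix.transpose_apply]
    rw [h1]
    have h2 : ∏ j, χ (bas hE j) ^ (E j i) = χ (∏ j, bas hE j ^ (E j i)) := by
      rw [map_prod]
      exact Finset.prod_congr rfl fun j _ => (map_pow χ _ _).symm
    rw [h2, prod_bas_col hE i, _root_.map_one]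
  refine ⟨⟨μ, hμmem⟩, ?_⟩
  refine MonoidHom.ext fun l => ?_
  show gmu μ (sec hE l) = χ l
  have h3 : gmu μ (sec hE l) = χ (∏ m, bas hE m ^ (sec hE l m)) := by
    rw [map_prod]
    refine Finset.prod_congr rfl fun m _ => ?_
    rw [map_zpow]
  rw [h3, ← eq_prod_bas hE l]

end BHaux

open Matrix in
/-- The symmetry group `G_{E^T}` of the Berglund–Hübsch transpose is isomorphic to the
group of characters `Hom(G_E, ℂ*)` of `G_E`. -/
theorem symGroup_transpose_iso_characters (E : Matrix (Fin n) (Fin n) ℕ)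
    (hdet : (E.map (Nat.cast : ℕ → ℤ)).det ≠ 0) :
    Nonempty (symGroup Eᵀ ≃* ((symGroup E) →* ℂˣ)) := by
  have hE := BHaux.hEc hdet
  exact ⟨MulEquiv.ofBijective (BHaux.Psi hE) ⟨BHaux.Psi_injective hE, BHaux.Psi_surjective hE⟩⟩
end

section
/- Let E be an n×n matrix of nonnegative integers with det E ≠ 0, let I ⊆ {1,…,n}, and let A = A(I) = {i : E_{ij} = 0 for all j ∉ I} be the set of rows of E supported in the columns I. Suppose |A| = |I|. Then the set {j : E_{ij} = 0 for all i ∈ A} of columns of E vanishing on the rows in A is exactly the complement Iᶜ of I. Consequently, for the transpose matrix E^T, the set Aᶜ ⊆ {1,…,n} satisfies {i : (E^T)_{ij} = 0 for all j ∉ Aᶜ} = Iᶜ, so |{i : (E^T)_{ij} = 0 for all j ∉ Aᶜ}| = |Aᶜ|; i.e. if I is a good index set for E with row set A, then Aᶜ is a good index set for E^T with row set Iᶜ. -/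
open Finset

variable {n : ℕ}

/-- For a subset `I ⊆ {1,…,n}` of columns, `rowSet E I = A(I)` is the set of rows of `E`
supported in the columns `I`, i.e. `{i : E i j = 0 for all j ∉ I}`. -/
def rowSet (E : Matrix (Fin n) (Fin n) ℕ) (I : Finset (Fin n)) : Finset (Fin n) :=
  @Finset.filter _ (fun i => ∀ j, j ∉ I → E i j = 0) (fun _ => Fintype.decidableForallFintype)
    Finset.univ

instance rowSetDecPred (E : Matrix (Fin n) (Fin n) ℕ) (I : Finset (Fin n)) :
    DecidablePred fun i : Fin n => ∀ j, j ∉ I → E i j = 0 :=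
  fun _ => Fintype.decidableForallFintype

open Matrix in
lemma key (E : Matrix (Fin n) (Fin n) ℕ)
    (hdet : (E.map (Nat.cast : ℕ → ℤ)).det ≠ 0)
    (I : Finset (Fin n)) (hgood : (rowSet E I).card = I.card)
    (j₀ : Fin n) (hj₀ : j₀ ∈ I) (hz : ∀ i ∈ rowSet E I, E i j₀ = 0) : False := by
  set A := rowSet E I with hA
  set J : Finset (Fin n) := I.erase j₀ with hJ
  set F : Matrix (Fin n) (Fin n) ℚ := E.map (Nat.cast : ℕ → ℚ) with hF
  have hFdet : F.det ≠ 0 := by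
    have : F = (E.map (Nat.cast : ℕ → ℤ)).map (Int.cast : ℤ → ℚ) := by
      rw [Matrix.map_map]; rfl
    rw [this]
    have h2 : ((E.map (Nat.cast : ℕ → ℤ)).map (Int.cast : ℤ → ℚ)).det
        = ((E.map (Nat.cast : ℕ → ℤ)).det : ℚ) := by
      rw [show ((E.map (Nat.cast : ℕ → ℤ)).map (Int.cast : ℤ → ℚ))
          = (Int.castRingHom ℚ).mapMatrix (E.map (Nat.cast : ℕ → ℤ)) from rfl,
        ← RingHom.map_det]
      rfl
    rw [h2]
    exact_mod_cast hdet
  have hunit : IsUnit F := (Matrix.isUnit_iff_isUnit_det F).2 (isUnit_iff_ne_zero.2 hFdet)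
  have hrows : LinearIndependent ℚ (fun i ↦ F i) :=
    Matrix.linearIndependent_rows_iff_isUnit.2 hunit
  have hv : LinearIndependent ℚ (fun i : A ↦ F i) :=
    hrows.comp Subtype.val Subtype.val_injective
  -- restricted family
  have hw : LinearIndependent ℚ (fun (i : A) (j : J) ↦ F i j) := by
    rw [Fintype.linearIndependent_iff]
    intro g hg
    refine Fintype.linearIndependent_iff.mp hv g ?_
    funext j
    by_cases hjJ : j ∈ J
    · have := congrFun hg ⟨j, hjJ⟩
      simpa [Finset.sum_apply] using this
    · have hzero : ∀ i : A, F i j = 0 := by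
        intro i
        have hi := (Finset.mem_filter.mp i.2).2
        by_cases hjI : j ∈ I
        · have : j = j₀ := by
            by_contra hne
            exact hjJ (Finset.mem_erase.2 ⟨hne, hjI⟩)
          subst this
          simp [hF, Matrix.map_apply, hz i i.2]
        · simp [hF, Matrix.map_apply, hi j hjI]
      simp [Finset.sum_apply, hzero]
  have hcard := hw.fintype_card_le_finrank
  rw [Module.finrank_pi] at hcard
  simp only [Fintype.card_coe] at hcard
  rw [hJ, Finset.card_erase_of_mem hj₀, hgood] at hcard
  have hpos : 0 < I.card := Finset.card_pos.2 ⟨j₀, hj₀⟩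
  omega

open Matrix in
/-- If `I` is a good index set for `E` (i.e. `|A(I)| = |I|` where `A = A(I)` is the set
of rows supported in the columns `I`), then the set of columns of `E` vanishing on the
rows in `A` is exactly `Iᶜ`; consequently `Aᶜ` is a good index set for `E^T` with row
set `Iᶜ`. -/
theorem rowSet_compl_transpose (E : Matrix (Fin n) (Fin n) ℕ)
    (hdet : (E.map (Nat.cast : ℕ → ℤ)).det ≠ 0)
    (I : Finset (Fin n)) (hgood : (rowSet E I).card = I.card) :
    (Finset.univ.filter fun j => ∀ i ∈ rowSet E I, E i j = 0) = Iᶜ ∧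
    rowSet Eᵀ ((rowSet E I)ᶜ) = Iᶜ ∧
    (rowSet Eᵀ ((rowSet E I)ᶜ)).card = ((rowSet E I)ᶜ).card := by
  have h1 : (Finset.univ.filter fun j => ∀ i ∈ rowSet E I, E i j = 0) = Iᶜ := by
    ext j
    simp only [Finset.mem_filter, Finset.mem_univ, true_and, Finset.mem_compl]
    constructor
    · intro h hjI
      exact key E hdet I hgood j hjI h
    · intro hj i hi
      exact (Finset.mem_filter.mp hi).2 j hj
  have h2 : rowSet Eᵀ ((rowSet E I)ᶜ) = Iᶜ := by
    rw [← h1]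
    ext i
    simp only [rowSet, Finset.mem_filter, Finset.mem_univ, true_and, Finset.mem_compl,
      Matrix.transpose_apply, not_not]
  refine ⟨h1, h2, ?_⟩
  rw [h2]
  simp [Finset.card_compl, hgood]
end

section
/- Let E be an n×n matrix of nonnegative integers with det E ≠ 0, let I ⊆ {1,…,n}, let A = {i : E_{ij} = 0 for all j ∉ I}, and suppose |A| = |I|. Let G_E^I = {λ ∈ G_E : λ_j = 1 for all j ∈ I} and let G_{E^T}^{Aᶜ} = {μ ∈ G_{E^T} : μ_j = 1 for all j ∉ A}, where G_E = {λ ∈ (ℂ*)^n : ∏_j λ_j^{E_{ij}} = 1 for all i} and G_{E^T} = {μ ∈ (ℂ*)^n : ∏_j μ_j^{E_{ji}} = 1 for all i}. Then |G_E^I| · |G_{E^T}^{Aᶜ}| = |det E|. -/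
open Finset
section aux
open Finset

variable {ι : Type*} [Fintype ι] [DecidableEq ι]

lemma prod_zpow_eq (x : ℂˣ) (s : Finset ι) (f : ι → ℤ) :
    ∏ i ∈ s, x ^ f i = x ^ (∑ i ∈ s, f i) := by
  induction s using Finset.cons_induction with
  | empty => simp
  | cons a s ha ih => rw [prod_cons, sum_cons, ih, _root_.zpow_add]

def phi (M : Matrix ι ι ℤ) : (ι → ℂˣ) →* (ι → ℂˣ) where
  toFun l i := ∏ j, l j ^ M i j
  map_one' := by funext i; simp
  map_mul' a b := by
    funext i
    simp [Pi.mul_apply, mul_zpow, Finset.prod_mul_distrib]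

lemma phi_apply (M : Matrix ι ι ℤ) (l : ι → ℂˣ) (i : ι) :
    phi M l i = ∏ j, l j ^ M i j := rfl

lemma phi_mul (M N : Matrix ι ι ℤ) (l : ι → ℂˣ) : phi (M * N) l = phi M (phi N l) := by
  funext i
  simp only [phi_apply, Matrix.mul_apply]
  calc ∏ j, l j ^ ∑ k, M i k * N k j
      = ∏ j, ∏ k, l j ^ (N k j * M i k) := by
        refine Finset.prod_congr rfl fun j _ => ?_
        rw [prod_zpow_eq]
        congr 1
        exact Finset.sum_congr rfl fun k _ => mul_comm _ _
    _ = ∏ k, ∏ j, l j ^ (N k j * M i k) := Finset.prod_comm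
    _ = ∏ k, (∏ j, l j ^ N k j) ^ M i k := by
        refine Finset.prod_congr rfl fun k _ => ?_
        rw [← prod_zpow]
        exact Finset.prod_congr rfl fun j _ => (zpow_mul _ _ _)

lemma phi_one (l : ι → ℂˣ) : phi (1 : Matrix ι ι ℤ) l = l := by
  funext i
  rw [phi_apply, Finset.prod_eq_single i (fun b _ hb => by
    rw [Matrix.one_apply_ne' hb, zpow_zero]) (by simp)]
  simp [Matrix.one_apply_eq]

-- key lemma
lemma card_ker_phi (M : Matrix ι ι ℤ) (hdet : M.det ≠ 0) :
    Nat.card {l : ι → ℂˣ // phi M l = 1} = M.det.natAbs := by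
  classical
  -- injectivity of the linear map
  have hinj : Function.Injective (Matrix.toLin' M) := by
    rw [← LinearMap.ker_eq_bot, LinearMap.ker_eq_bot']
    intro v hv
    rw [Matrix.toLin'_apply] at hv
    have h2 : (M.adjugate * M).mulVec v = M.det • v := by
      rw [Matrix.adjugate_mul, Matrix.smul_mulVec, Matrix.one_mulVec]
    rw [← Matrix.mulVec_mulVec, hv, Matrix.mulVec_zero] at h2
    funext i
    have := congrFun h2.symm i
    simp only [Pi.smul_apply, smul_eq_mul, Pi.zero_apply, mul_eq_zero] at this
    exact this.resolve_left hdet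
  set f := Matrix.toLin' M with hf
  obtain ⟨m, ⟨bM, bN, femb, a, hsnf⟩⟩ :=
    Submodule.smithNormalForm (Pi.basisFun ℤ ι) (LinearMap.range f)
  -- m = card ι
  have hm : m = Fintype.card ι := by
    have h1 : Module.finrank ℤ (LinearMap.range f) = m := by
      rw [Module.finrank_eq_card_basis bN, Fintype.card_fin]
    have h2 : Module.finrank ℤ (LinearMap.range f) = Fintype.card ι := by
      rw [← (LinearEquiv.ofInjective f hinj).finrank_eq, Module.finrank_pi]
    rw [← h1, h2]
  have hcard : Fintype.card (Fin m) = Fintype.card ι := by rw [Fintype.card_fin, hm]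
  have hbij : Function.Bijective femb :=
    (Fintype.bijective_iff_injective_and_card femb).2 ⟨femb.injective, hcard⟩
  let e : Fin m ≃ ι := Equiv.ofBijective femb hbij
  let std := Pi.basisFun ℤ ι
  let bN' : Module.Basis ι ℤ (LinearMap.range f) := bN.reindex e
  let g : (ι → ℤ) ≃ₗ[ℤ] LinearMap.range f := LinearEquiv.ofInjective f hinj
  let a' : ι → ℤ := a ∘ e.symm
  let P : Matrix ι ι ℤ := LinearMap.toMatrix bM std LinearMap.id
  let P' : Matrix ι ι ℤ := LinearMap.toMatrix std bM LinearMap.id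
  let Q : Matrix ι ι ℤ := LinearMap.toMatrix std bN' g.toLinearMap
  let Q' : Matrix ι ι ℤ := LinearMap.toMatrix bN' std g.symm.toLinearMap
  have hPP' : P * P' = 1 := by
    rw [← LinearMap.toMatrix_comp std bM std, LinearMap.id_comp, LinearMap.toMatrix_id]
  have hP'P : P' * P = 1 := by
    rw [← LinearMap.toMatrix_comp bM std bM, LinearMap.id_comp, LinearMap.toMatrix_id]
  have hgg : g.toLinearMap.comp g.symm.toLinearMap = LinearMap.id := by
    ext x; simp
  have hgg' : g.symm.toLinearMap.comp g.toLinearMap = LinearMap.id := by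
    ext x; simp
  have hQQ' : Q * Q' = 1 := by
    rw [← LinearMap.toMatrix_comp bN' std bN', hgg, LinearMap.toMatrix_id]
  have hQ'Q : Q' * Q = 1 := by
    rw [← LinearMap.toMatrix_comp std bN' std, hgg', LinearMap.toMatrix_id]
  -- the diagonal middle factor
  have hT : LinearMap.toMatrix bN' bM ((LinearMap.range f).subtype) = Matrix.diagonal a' := by
    ext i j
    rw [LinearMap.toMatrix_apply]
    have : ((LinearMap.range f).subtype (bN' j) : ι → ℤ) = a (e.symm j) • bM (femb (e.symm j)) := by
      rw [Submodule.subtype_apply, Module.Basis.reindex_apply, hsnf]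
    have hfe : femb (e.symm j) = e (e.symm j) := rfl
    rw [this, hfe, e.apply_symm_apply, _root_.map_smul, Module.Basis.repr_self]
    simp only [Finsupp.smul_single, smul_eq_mul, mul_one, Finsupp.single_apply,
      Matrix.diagonal_apply]
    by_cases h : j = i
    · subst h; simp [a']
    · rw [if_neg h, if_neg (Ne.symm h)]
  -- matrix factorization
  have h0 : M = LinearMap.toMatrix std std f := by
    rw [LinearMap.toMatrix_eq_toMatrix', hf, LinearMap.toMatrix'_toLin']
  have h1 : f = (LinearMap.range f).subtype.comp g.toLinearMap := by
    ext x; simp [g]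
  have h3 : LinearMap.toMatrix bN' std (LinearMap.range f).subtype
      = P * Matrix.diagonal a' := by
    rw [← hT, show (LinearMap.range f).subtype
        = LinearMap.id.comp (LinearMap.range f).subtype from (LinearMap.id_comp _).symm]
    rw [LinearMap.toMatrix_comp bN' bM std]
    simp only [LinearMap.comp_id, LinearMap.id_comp]
    rfl
  have hfact : M = P * Matrix.diagonal a' * Q := by
    rw [h0]
    conv_lhs => rw [h1]
    rw [LinearMap.toMatrix_comp std bN' std, h3]
  -- determinant computation
  have hdet_eq : M.det.natAbs = ∏ i, (a' i).natAbs := by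
    have h4 := congrArg Matrix.det hfact
    rw [Matrix.det_mul, Matrix.det_mul, Matrix.det_diagonal] at h4
    have hP1 : P.det.natAbs = 1 := by
      have h5 := congrArg Int.natAbs (congrArg Matrix.det hPP')
      rw [Matrix.det_mul, Matrix.det_one, Int.natAbs_mul, Int.natAbs_one] at h5
      exact Nat.eq_one_of_mul_eq_one_right h5
    have hQ1 : Q.det.natAbs = 1 := by
      have h5 := congrArg Int.natAbs (congrArg Matrix.det hQQ')
      rw [Matrix.det_mul, Matrix.det_one, Int.natAbs_mul, Int.natAbs_one] at h5
      exact Nat.eq_one_of_mul_eq_one_right h5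
    rw [h4, Int.natAbs_mul, Int.natAbs_mul, hP1, hQ1, one_mul, mul_one]
    exact map_prod Int.natAbsHom a' Finset.univ
  have ha' : ∀ i, (a' i).natAbs ≠ 0 := by
    intro i hi
    have h6 : M.det.natAbs ≠ 0 := Int.natAbs_ne_zero.mpr hdet
    rw [hdet_eq] at h6
    exact h6 (Finset.prod_eq_zero (Finset.mem_univ i) hi)
  haveI : ∀ i, NeZero (a' i).natAbs := fun i => ⟨ha' i⟩
  -- reduce the kernel to the kernel of the diagonal matrix
  have hker1 : Nat.card {l : ι → ℂˣ // phi M l = 1}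
      = Nat.card {l : ι → ℂˣ // phi (Matrix.diagonal a') l = 1} := by
    apply Nat.card_congr
    refine ⟨fun x => ⟨phi Q x.1, ?_⟩, fun y => ⟨phi Q' y.1, ?_⟩, fun x => ?_, fun y => ?_⟩
    · obtain ⟨l, hl⟩ := x
      have h7 : phi P (phi (Matrix.diagonal a') (phi Q l)) = 1 := by
        rw [← phi_mul, ← phi_mul, ← hfact]; exact hl
      have h8 : phi (P' * P) (phi (Matrix.diagonal a') (phi Q l)) = phi P' 1 := by
        rw [phi_mul]; exact congrArg (phi P') h7
      rwa [hP'P, phi_one, _root_.map_one] at h8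
    · obtain ⟨lm, hm⟩ := y
      show phi M (phi Q' lm) = 1
      have h9 : phi Q (phi Q' lm) = lm := by rw [← phi_mul, hQQ', phi_one]
      rw [hfact, phi_mul, phi_mul, h9, hm]; exact _root_.map_one (phi _)
    · apply Subtype.ext
      show phi Q' (phi Q x.1) = x.1
      rw [← phi_mul, hQ'Q, phi_one]
    · apply Subtype.ext
      show phi Q (phi Q' y.1) = y.1
      rw [← phi_mul, hQQ', phi_one]
  -- the kernel of the diagonal matrix
  have habs : ∀ (x : ℂˣ) (d : ℤ), x ^ d = 1 ↔ x ^ d.natAbs = 1 := by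
    intro x d
    rcases Int.natAbs_eq d with h | h
    · rw [← zpow_natCast, ← h]
    · rw [← zpow_natCast]
      have h10 : (d.natAbs : ℤ) = -d := by omega
      rw [h10, _root_.zpow_neg, inv_eq_one]
  have hdiag : ∀ (l : ι → ℂˣ), phi (Matrix.diagonal a') l = 1
      ↔ ∀ i, l i ∈ rootsOfUnity (a' i).natAbs ℂ := by
    intro l
    rw [funext_iff]
    refine forall_congr' fun i => ?_
    rw [phi_apply, Finset.prod_eq_single i (fun b _ hb => by
      rw [Matrix.diagonal_apply_ne' _ hb, zpow_zero]) (by simp), Matrix.diagonal_apply_eq,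
      Pi.one_apply, mem_rootsOfUnity]
    exact habs (l i) (a' i)
  have hker2 : Nat.card {l : ι → ℂˣ // phi (Matrix.diagonal a') l = 1}
      = ∏ i, (a' i).natAbs := by
    have e2 : {l : ι → ℂˣ // phi (Matrix.diagonal a') l = 1}
        ≃ (∀ i, rootsOfUnity (a' i).natAbs ℂ) :=
      { toFun := fun x i => ⟨x.1 i, (hdiag x.1).1 x.2 i⟩
        invFun := fun y => ⟨fun i => (y i : ℂˣ), (hdiag _).2 fun i => (y i).2⟩
        left_inv := fun x => rfl
        right_inv := fun y => rfl }
    rw [Nat.card_congr e2, Nat.card_pi]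
    refine Finset.prod_congr rfl fun i _ => ?_
    rw [Complex.card_rootsOfUnity]
  rw [hker1, hker2, hdet_eq]

lemma natAbs_det_submatrix {κ ι : Type*} [Fintype κ] [DecidableEq κ] [Fintype ι] [DecidableEq ι]
    (e₁ e₂ : κ ≃ ι) (M : Matrix ι ι ℤ) :
    ((M.submatrix e₁ e₂).det).natAbs = M.det.natAbs := by
  have h : M.submatrix ⇑e₁ ⇑e₂
      = (M.submatrix ⇑e₁ ⇑e₁).submatrix id ⇑(e₂.trans e₁.symm) := by
    ext i j
    simp [Matrix.submatrix_apply]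
  rw [h, Matrix.det_permute' (e₂.trans e₁.symm) (M.submatrix ⇑e₁ ⇑e₁)]
  rcases Int.units_eq_one_or (Equiv.Perm.sign (e₂.trans e₁.symm)) with hs | hs <;>
    rw [hs] <;>
    simp [Matrix.det_submatrix_equiv_self]

end aux


variable {n : ℕ}

/-- The subgroup of `(ℂ*)^n` of elements `λ` with `λ_j = 1` for all `j ∈ I`. -/
def fixedSub (I : Finset (Fin n)) : Subgroup (Fin n → ℂˣ) where
  carrier := {l | ∀ j ∈ I, l j = 1}
  one_mem' := by intro j hj; rfl
  mul_mem' := by intro a b ha hb j hj; simp [Pi.mul_apply, ha j hj, hb j hj]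
  inv_mem' := by intro a ha j hj; simp [Pi.inv_apply, ha j hj]

/-- The isotropy subgroup `G_E^I = {λ ∈ G_E : λ_j = 1 for all j ∈ I}` of the points of
the coordinate torus `(ℂ*)^{Iᶜ}` under the diagonal `G_E`-action. -/
def isotropy (E : Matrix (Fin n) (Fin n) ℕ) (I : Finset (Fin n)) :
    Subgroup (Fin n → ℂˣ) :=
  symGroup E ⊓ fixedSub I


lemma mem_symGroup {n : ℕ} {E : Matrix (Fin n) (Fin n) ℕ} {l : Fin n → ℂˣ} :
    l ∈ symGroup E ↔ ∀ i, ∏ j, l j ^ E i j = 1 := Iff.rfl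

lemma mem_fixedSub {n : ℕ} {I : Finset (Fin n)} {l : Fin n → ℂˣ} :
    l ∈ fixedSub I ↔ ∀ j ∈ I, l j = 1 := Iff.rfl

lemma mem_isotropy {n : ℕ} {E : Matrix (Fin n) (Fin n) ℕ} {I : Finset (Fin n)}
    {l : Fin n → ℂˣ} :
    l ∈ isotropy E I ↔ (∀ i, ∏ j, l j ^ E i j = 1) ∧ ∀ j ∈ I, l j = 1 := by
  rw [isotropy, Subgroup.mem_inf]
  exact and_congr mem_symGroup mem_fixedSub

open Matrix in
/-- If `I` is good for `E` (with row set `A = rowSet E I`, `|A| = |I|`), then the orders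
of the isotropy subgroups `G_E^I` and `G_{E^T}^{Aᶜ}` multiply up to `|det E|`. -/
theorem card_isotropy_mul_card_isotropy_transpose (E : Matrix (Fin n) (Fin n) ℕ)
    (hdet : (E.map (Nat.cast : ℕ → ℤ)).det ≠ 0)
    (I : Finset (Fin n)) (hgood : (rowSet E I).card = I.card) :
    Nat.card (isotropy E I) * Nat.card (isotropy Eᵀ ((rowSet E I)ᶜ)) =
      (E.map (Nat.cast : ℕ → ℤ)).det.natAbs := by
  classical
  set Eℤ := E.map (Nat.cast : ℕ → ℤ) with hEZ
  set A := rowSet E I with hA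
  have hmemA : ∀ i : Fin n, i ∈ A ↔ ∀ j, j ∉ I → E i j = 0 := fun i => by
    rw [hA, rowSet, @Finset.mem_filter _ _ (fun _ => Fintype.decidableForallFintype)]
    exact ⟨fun h => h.2, fun h => ⟨Finset.mem_univ i, h⟩⟩
  have hcardIA : Fintype.card ↥I = Fintype.card ↥A := by
    rw [Fintype.card_coe, Fintype.card_coe, hgood]
  have hcardAc : Fintype.card ↥(Aᶜ) = Fintype.card ↥(Iᶜ) := by
    rw [Fintype.card_coe, Fintype.card_coe, Finset.card_compl, Finset.card_compl, hgood]
  let g : ↥I ≃ ↥A := Fintype.equivOfCardEq hcardIA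
  let e : ↥(Aᶜ) ≃ ↥(Iᶜ) := Fintype.equivOfCardEq hcardAc
  let D : Matrix ↥(Iᶜ) ↥(Iᶜ) ℤ := fun i j => (E ↑(e.symm i) ↑j : ℤ)
  let N : Matrix ↥I ↥I ℤ := fun j i => (E ↑(g i) ↑j : ℤ)
  -- Step A : the isotropy group of `E` at `I` is the kernel of `phi D`
  have stepA : Nat.card (isotropy E I) = Nat.card {μ : ↥(Iᶜ) → ℂˣ // phi D μ = 1} := by
    apply Nat.card_congr
    refine ⟨fun x => ⟨fun j => x.1 ↑j, ?_⟩,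
      fun y => ⟨fun j => if hj : j ∈ Iᶜ then y.1 ⟨j, hj⟩ else 1, ?_⟩, fun x => ?_, fun y => ?_⟩
    · obtain ⟨l, hl⟩ := x
      obtain ⟨hsym, hfix⟩ := mem_isotropy.mp hl
      funext i
      show (∏ j : ↥(Iᶜ), l ↑j ^ D i j) = 1
      have hz : ∀ j : ↥(Iᶜ), l ↑j ^ D i j = l ↑j ^ E ↑(e.symm i) ↑j := fun j => by
        rw [show D i j = ((E ↑(e.symm i) ↑j : ℕ) : ℤ) from rfl, zpow_natCast]
      rw [Finset.prod_congr rfl (fun j _ => hz j),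
        Finset.prod_coe_sort (Iᶜ) (fun j => l j ^ E ↑(e.symm i) j)]
      have h1 := hsym ↑(e.symm i)
      rw [← Finset.prod_mul_prod_compl I (fun j => l j ^ E ↑(e.symm i) j),
        Finset.prod_eq_one (fun j hj => by rw [hfix j hj, one_pow]), one_mul] at h1
      exact h1
    · rw [mem_isotropy]
      constructor
      · intro i
        by_cases hi : i ∈ A
        · apply Finset.prod_eq_one
          intro j _
          by_cases hj : j ∈ I
          · rw [dif_neg (by simp [Finset.mem_compl, hj]), one_pow]
          · rw [(hmemA i).1 hi j hj, pow_zero]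
        · have hi' : i ∈ Aᶜ := Finset.mem_compl.mpr hi
          have hy := congrFun y.2 (e ⟨i, hi'⟩)
          rw [phi_apply, Pi.one_apply] at hy
          have hz : ∀ j : ↥(Iᶜ), y.1 j ^ D (e ⟨i, hi'⟩) j = y.1 j ^ E i ↑j := fun j => by
            rw [show D (e ⟨i, hi'⟩) j = ((E ↑(e.symm (e ⟨i, hi'⟩)) ↑j : ℕ) : ℤ) from rfl,
              Equiv.symm_apply_apply, zpow_natCast]
          rw [Finset.prod_congr rfl (fun j _ => hz j)] at hy
          rw [← Finset.prod_mul_prod_compl I, Finset.prod_eq_one (fun j hj => by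
            rw [dif_neg (by simp [Finset.mem_compl, hj]), one_pow]), one_mul,
            ← Finset.prod_coe_sort (Iᶜ)
              (fun j => (if hj : j ∈ Iᶜ then y.1 ⟨j, hj⟩ else 1) ^ E i j)]
          rw [← hy]
          refine Finset.prod_congr rfl fun j _ => ?_
          rw [dif_pos j.2]
      · intro j hj
        rw [dif_neg (by simp [Finset.mem_compl, hj])]
    · apply Subtype.ext
      funext j
      by_cases hj : j ∈ Iᶜ
      · simp only [dif_pos hj]
      · simp only [dif_neg hj]
        exact ((mem_isotropy.mp x.2).2 j (by simpa [Finset.mem_compl, not_not] using hj)).symm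
    · apply Subtype.ext
      funext j
      simp only [dif_pos j.2]
  -- Step B : the isotropy group of `Eᵀ` at `Aᶜ` is the kernel of `phi N`
  have stepB : Nat.card (isotropy Eᵀ (Aᶜ)) = Nat.card {ν : ↥I → ℂˣ // phi N ν = 1} := by
    apply Nat.card_congr
    refine ⟨fun x => ⟨fun i => x.1 ↑(g i), ?_⟩,
      fun y => ⟨fun i => if hi : i ∈ A then y.1 (g.symm ⟨i, hi⟩) else 1, ?_⟩,
      fun x => ?_, fun y => ?_⟩
    · obtain ⟨l, hl⟩ := x
      obtain ⟨hsym, hfix⟩ := mem_isotropy.mp hl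
      funext j
      show (∏ i : ↥I, l ↑(g i) ^ N j i) = 1
      have hz : ∀ i : ↥I, l ↑(g i) ^ N j i = l ↑(g i) ^ E ↑(g i) ↑j := fun i => by
        rw [show N j i = ((E ↑(g i) ↑j : ℕ) : ℤ) from rfl, zpow_natCast]
      rw [Finset.prod_congr rfl (fun i _ => hz i),
        Equiv.prod_comp g (fun a : ↥A => l ↑a ^ E ↑a ↑j),
        Finset.prod_coe_sort A (fun i => l i ^ E i ↑j)]
      have h1 := hsym ↑j
      simp only [Matrix.transpose_apply] at h1
      rw [← Finset.prod_mul_prod_compl A (fun i => l i ^ E i ↑j), mul_comm,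
        Finset.prod_eq_one (fun i hi => by rw [hfix i hi, one_pow]), one_mul] at h1
      exact h1
    · rw [mem_isotropy]
      constructor
      · intro j
        simp only [Matrix.transpose_apply]
        rw [← Finset.prod_mul_prod_compl A (fun i => _ ^ E i j), mul_comm,
          Finset.prod_eq_one (fun i hi => by
            rw [dif_neg (Finset.mem_compl.mp hi), one_pow]), one_mul,
          ← Finset.prod_coe_sort A
            (fun i => (if hi : i ∈ A then y.1 (g.symm ⟨i, hi⟩) else 1) ^ E i j)]
        by_cases hj : j ∈ I
        · have hy := congrFun y.2 ⟨j, hj⟩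
          rw [phi_apply, Pi.one_apply] at hy
          have hz : ∀ i : ↥I, y.1 i ^ N ⟨j, hj⟩ i = y.1 i ^ E ↑(g i) j := fun i => by
            rw [show N ⟨j, hj⟩ i = ((E ↑(g i) j : ℕ) : ℤ) from rfl, zpow_natCast]
          rw [Finset.prod_congr rfl (fun i _ => hz i)] at hy
          rw [← Equiv.prod_comp g
            (fun a : ↥A => (if hi : (a : Fin n) ∈ A then y.1 (g.symm ⟨↑a, hi⟩) else 1) ^ E ↑a j)]
          rw [← hy]
          refine Finset.prod_congr rfl fun i _ => ?_
          rw [dif_pos (g i).2]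
          congr 1
          rw [show (⟨↑(g i), (g i).2⟩ : ↥A) = g i from rfl, Equiv.symm_apply_apply]
        · apply Finset.prod_eq_one
          intro i _
          rw [(hmemA ↑i).1 i.2 j hj, pow_zero]
      · intro i hi
        rw [dif_neg (Finset.mem_compl.mp hi)]
    · apply Subtype.ext
      funext i
      by_cases hi : i ∈ A
      · simp only [dif_pos hi]
        rw [Equiv.apply_symm_apply]
      · simp only [dif_neg hi]
        exact ((mem_isotropy.mp x.2).2 i (Finset.mem_compl.mpr hi)).symm
    · apply Subtype.ext
      funext i
      simp only [dif_pos (g i).2]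
      congr 1
      rw [show (⟨↑(g i), (g i).2⟩ : ↥A) = g i from rfl, Equiv.symm_apply_apply]
  -- Step C : determinants
  let eA : ↥(Aᶜ) ≃ {x : Fin n // ¬ x ∈ A} := Equiv.subtypeEquivRight (fun x => Finset.mem_compl)
  let eI' : ↥(Iᶜ) ≃ {x : Fin n // ¬ x ∈ I} := Equiv.subtypeEquivRight (fun x => Finset.mem_compl)
  let eR : ↥A ⊕ ↥(Aᶜ) ≃ Fin n :=
    (Equiv.sumCongr (Equiv.refl ↥A) eA).trans (Equiv.sumCompl (· ∈ A))
  let eC : ↥I ⊕ ↥(Iᶜ) ≃ Fin n :=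
    (Equiv.sumCongr (Equiv.refl ↥I) eI').trans (Equiv.sumCompl (· ∈ I))
  let eCol : ↥A ⊕ ↥(Aᶜ) ≃ Fin n := (Equiv.sumCongr g.symm e).trans eC
  let B' : Matrix ↥A ↥A ℤ := fun a a' => (E ↑a ↑(g.symm a') : ℤ)
  let D' : Matrix ↥(Aᶜ) ↥(Aᶜ) ℤ := fun b c => (E ↑b ↑(e c) : ℤ)
  let C' : Matrix ↥(Aᶜ) ↥A ℤ := fun b a' => (E ↑b ↑(g.symm a') : ℤ)
  have hG : Eℤ.submatrix ⇑eR ⇑eCol = Matrix.fromBlocks B' 0 C' D' := by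
    ext i j
    rcases i with a | b <;> rcases j with a' | c <;>
      simp only [Matrix.submatrix_apply, Matrix.fromBlocks_apply₁₁, Matrix.fromBlocks_apply₁₂,
        Matrix.fromBlocks_apply₂₁, Matrix.fromBlocks_apply₂₂, eR, eCol, eC, eA, eI',
        Equiv.trans_apply, Equiv.sumCongr_apply, Sum.map_inl, Sum.map_inr,
        Equiv.sumCompl_apply_inl, Equiv.sumCompl_apply_inr, Equiv.refl_apply,
        Equiv.subtypeEquivRight_apply_coe, hEZ, Matrix.map_apply, B', C', D',
        Matrix.zero_apply, Matrix.fromBlocks, Matrix.of_apply, Sum.elim_inl, Sum.elim_inr,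
        Pi.zero_apply]
    rw [Nat.cast_eq_zero]
    exact (hmemA ↑a).1 a.2 ↑(e c) (Finset.mem_compl.mp (e c).2)
  have hdetG : Eℤ.det.natAbs = (B'.det).natAbs * (D'.det).natAbs := by
    rw [← natAbs_det_submatrix eR eCol Eℤ, hG, Matrix.det_fromBlocks_zero₁₂, Int.natAbs_mul]
  have hN : N.det.natAbs = B'.det.natAbs := by
    have h : N = (B'.submatrix ⇑g ⇑g)ᵀ := by
      ext j i
      simp only [N, B', Matrix.transpose_apply, Matrix.submatrix_apply, Equiv.symm_apply_apply,
        Matrix.submatrix, Matrix.of_apply]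
    rw [h, Matrix.det_transpose, Matrix.det_submatrix_equiv_self]
  have hD : D.det.natAbs = D'.det.natAbs := by
    have h : D = D'.submatrix ⇑e.symm ⇑e.symm := by
      ext i j
      simp only [D, D', Matrix.submatrix_apply, Equiv.apply_symm_apply, Matrix.submatrix,
        Matrix.of_apply]
    rw [h, Matrix.det_submatrix_equiv_self]
  have h0 : Eℤ.det.natAbs ≠ 0 := Int.natAbs_ne_zero.mpr hdet
  rw [hdetG] at h0
  have hNne : N.det ≠ 0 := by
    rw [← Int.natAbs_ne_zero, hN]
    exact fun h => h0 (by rw [h, zero_mul])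
  have hDne : D.det ≠ 0 := by
    rw [← Int.natAbs_ne_zero, hD]
    exact fun h => h0 (by rw [h, mul_zero])
  rw [stepA, stepB, card_ker_phi D hDne, card_ker_phi N hNne, hdetG, hN, hD, mul_comm]
end
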